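/- For d ≥ 2 and α ∈ [0,1], let Γ_d(α) be the d×d matrix with all diagonal entries equal to 1, with (i,d)- and (d,i)-entries equal to α for i = 1,...,d−1, and with all other entries equal to 0. Then Γ_d(α) is a tail-dependence matrix if and only if 0 ≤ α ≤ 1/(d−1) (Proposition 4.7). -/

import Mathlib

open MeasureTheory ProbabilityTheory Filter Set

noncomputable section

/-- A Bernoulli-compatible matrix: `B i j = E[X i * X j]` for some random vector `X`
taking values in `{0,1}^d` on some probability space. -/
def IsBernoulliCompatible {d : ℕ} (B : Matrix (Fin d) (Fin d) ℝ) : Prop :=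
  ∃ (Ω : Type) (_ : MeasurableSpace Ω) (μ : Measure Ω),
    IsProbabilityMeasure μ ∧
    ∃ X : Ω → Fin d → ℝ, Measurable X ∧
      (∀ ω i, X ω i = 0 ∨ X ω i = 1) ∧
      (∀ i j, B i j = ∫ ω, X ω i * X ω j ∂μ)

/-- The (lower) tail-dependence coefficient of `Yi` and `Yj` exists and equals `l`:
`P(Yi ≤ u, Yj ≤ u)/u → l` as `u ↓ 0`. -/
def HasTailDepCoeff {Ω : Type} [MeasurableSpace Ω] (μ : Measure Ω)
    (Yi Yj : Ω → ℝ) (l : ℝ) : Prop :=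
  Filter.Tendsto (fun u : ℝ => (μ {ω | Yi ω ≤ u ∧ Yj ω ≤ u}).toReal / u)
    (nhdsWithin 0 (Set.Ioi 0)) (nhds l)

/-- The uniform distribution on `[0,1]`. -/
def stdUniform : Measure ℝ := volume.restrict (Set.Icc (0:ℝ) 1)

/-- A tail-dependence matrix: the matrix of pairwise (lower) tail-dependence coefficients
of some random vector with standard uniform margins. -/
def IsTailDependenceMatrix {d : ℕ} (Λ : Matrix (Fin d) (Fin d) ℝ) : Prop :=
  ∃ (Ω : Type) (_ : MeasurableSpace Ω) (μ : Measure Ω),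
    IsProbabilityMeasure μ ∧
    ∃ Y : Ω → Fin d → ℝ, Measurable Y ∧
      (∀ i, μ.map (fun ω => Y ω i) = stdUniform) ∧
      (∀ i j, HasTailDepCoeff μ (fun ω => Y ω i) (fun ω => Y ω j) (Λ i j))


-- Auxiliary material --

instance : IsProbabilityMeasure stdUniform := ⟨by simp [stdUniform]⟩

lemma stdUniform_Iic {u : ℝ} (h0 : 0 ≤ u) (h1 : u ≤ 1) :
    stdUniform (Set.Iic u) = ENNReal.ofReal u := by
  rw [stdUniform, Measure.restrict_apply measurableSet_Iic]
  have : Set.Iic u ∩ Set.Icc 0 1 = Set.Icc 0 u := by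
    ext x; simp only [mem_inter_iff, mem_Iic, mem_Icc]
    constructor
    · rintro ⟨h, h2, _⟩; exact ⟨h2, h⟩
    · rintro ⟨h2, h⟩; exact ⟨h, h2, le_trans h h1⟩
  rw [this, Real.volume_Icc, sub_zero]

lemma stdUniform_Ico {a b : ℝ} (h0 : 0 ≤ a) (h1 : b ≤ 1) :
    stdUniform (Set.Ico a b) = ENNReal.ofReal (b - a) := by
  rw [stdUniform, Measure.restrict_apply measurableSet_Ico]
  have : Set.Ico a b ∩ Set.Icc 0 1 = Set.Ico a b := by
    apply Set.inter_eq_left.mpr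
    intro x hx
    exact ⟨le_trans h0 hx.1, le_of_lt (lt_of_lt_of_le hx.2 h1)⟩
  rw [this, Real.volume_Ico]

lemma bonferroni {Ω ι : Type*} [MeasurableSpace Ω] [DecidableEq ι] (μ : Measure Ω)
    (B : ι → Set Ω) (hB : ∀ i, MeasurableSet (B i)) (s : Finset ι) :
    ∑ i ∈ s, μ (B i) ≤ μ (⋃ i ∈ (s : Set ι), B i)
      + ∑ p ∈ s.offDiag, μ (B p.1 ∩ B p.2) := by
  induction s using Finset.induction_on with
  | empty => simp
  | @insert a s ha ih =>
    rw [Finset.sum_insert ha]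
    have hUm : MeasurableSet (⋃ i ∈ (s : Set ι), B i) :=
      MeasurableSet.biUnion s.countable_toSet (fun i _ => hB i)
    have h1 : μ (B a) + μ (⋃ i ∈ (s : Set ι), B i)
        = μ (B a ∪ ⋃ i ∈ (s : Set ι), B i) + μ (B a ∩ ⋃ i ∈ (s : Set ι), B i) :=
      (measure_union_add_inter (B a) hUm).symm
    have h2 : μ (B a ∩ ⋃ i ∈ (s : Set ι), B i) ≤ ∑ i ∈ s, μ (B a ∩ B i) := by
      rw [Set.inter_iUnion₂]
      exact measure_biUnion_finset_le s _
    have h3 : μ (B a ∪ ⋃ i ∈ (s : Set ι), B i) = μ (⋃ i ∈ ((insert a s : Finset ι) : Set ι), B i) := by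
      rw [Finset.coe_insert, Set.biUnion_insert]
    have h4 : ∑ p ∈ s.offDiag, μ (B p.1 ∩ B p.2) + ∑ i ∈ s, μ (B a ∩ B i)
        ≤ ∑ p ∈ (insert a s).offDiag, μ (B p.1 ∩ B p.2) := by
      have hsub : s.offDiag ∪ {a} ×ˢ s ⊆ (insert a s).offDiag := by
        rw [Finset.offDiag_insert (α := ι) (s := s) (a := a) ha]
        exact Finset.subset_union_left
      have hdisj : Disjoint s.offDiag ({a} ×ˢ s) := by
        rw [Finset.disjoint_left]
        rintro ⟨x, y⟩ hx hy
        simp only [Finset.mem_product, Finset.mem_singleton] at hy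
        exact ha (hy.1 ▸ (Finset.mem_offDiag.mp hx).1)
      calc ∑ p ∈ s.offDiag, μ (B p.1 ∩ B p.2) + ∑ i ∈ s, μ (B a ∩ B i)
          = ∑ p ∈ s.offDiag ∪ {a} ×ˢ s, μ (B p.1 ∩ B p.2) := by
            rw [Finset.sum_union hdisj, Finset.singleton_product, Finset.sum_map]
            rfl
        _ ≤ _ := Finset.sum_le_sum_of_subset hsub
    calc μ (B a) + ∑ i ∈ s, μ (B i)
        ≤ μ (B a) + (μ (⋃ i ∈ (s : Set ι), B i) + ∑ p ∈ s.offDiag, μ (B p.1 ∩ B p.2)) :=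
          add_le_add_right ih _
      _ = (μ (B a) + μ (⋃ i ∈ (s : Set ι), B i)) + ∑ p ∈ s.offDiag, μ (B p.1 ∩ B p.2) := by ring
      _ ≤ μ (⋃ i ∈ ((insert a s : Finset ι) : Set ι), B i)
            + (∑ p ∈ s.offDiag, μ (B p.1 ∩ B p.2) + ∑ i ∈ s, μ (B a ∩ B i)) := by
          rw [h1, h3]
          calc μ (⋃ i ∈ ((insert a s : Finset ι) : Set ι), B i) + μ (B a ∩ ⋃ i ∈ (s : Set ι), B i)
              + ∑ p ∈ s.offDiag, μ (B p.1 ∩ B p.2)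
              ≤ μ (⋃ i ∈ ((insert a s : Finset ι) : Set ι), B i) + ∑ i ∈ s, μ (B a ∩ B i)
                + ∑ p ∈ s.offDiag, μ (B p.1 ∩ B p.2) := by
                exact add_le_add_left (add_le_add_right h2 _) _
            _ = _ := by ring
      _ ≤ _ := add_le_add_right h4 _

abbrev piUnif (n : ℕ) : Measure (Fin n → ℝ) := Measure.pi (fun _ => stdUniform)

variable {n : ℕ}


lemma box1 (a : Fin n) (A : Set ℝ) :
    piUnif n {ω | ω a ∈ A} = stdUniform A := by
  classical
  have hset : {ω : Fin n → ℝ | ω a ∈ A} = Set.univ.pi (fun k => if k = a then A else Set.univ) := by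
    ext ω
    simp only [mem_setOf_eq, Set.mem_pi, Set.mem_univ, forall_true_left]
    constructor
    · intro h k; split <;> simp_all
    · intro h; have := h a; simpa using this
  rw [hset, Measure.pi_pi]
  rw [Finset.prod_eq_single a (fun k _ hk => by simp [hk]) (by simp)]
  simp [mul_assoc]

lemma box2 {a b : Fin n} (hab : a ≠ b) (A B : Set ℝ) :
    piUnif n {ω | ω a ∈ A ∧ ω b ∈ B} = stdUniform A * stdUniform B := by
  classical
  set s : Fin n → Set ℝ := fun k => if k = a then A else if k = b then B else Set.univ with hs
  have hset : {ω : Fin n → ℝ | ω a ∈ A ∧ ω b ∈ B} = Set.univ.pi s := by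
    ext ω
    simp only [mem_setOf_eq, Set.mem_pi, Set.mem_univ, forall_true_left, hs]
    constructor
    · rintro ⟨h1, h2⟩ k; split_ifs with hka hkb <;> simp_all
    · intro h
      refine ⟨?_, ?_⟩
      · have := h a; simpa using this
      · have := h b; simp only [if_neg (Ne.symm hab)] at this; simpa using this
  rw [hset, Measure.pi_pi]
  have h1 : ∀ k ∈ (Finset.univ : Finset (Fin n)), k ∉ ({a, b} : Finset (Fin n)) →
      stdUniform (s k) = 1 := by
    intro k _ hk
    simp only [Finset.mem_insert, Finset.mem_singleton, not_or] at hk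
    simp [hs, hk.1, hk.2]
  rw [← Finset.prod_subset (Finset.subset_univ ({a, b} : Finset (Fin n))) h1]
  rw [Finset.prod_insert (by simp [hab]), Finset.prod_singleton]
  simp [hs, Ne.symm hab]

lemma box3 {a b c : Fin n} (hab : a ≠ b) (hac : a ≠ c) (hbc : b ≠ c) (A B C : Set ℝ) :
    piUnif n {ω | ω a ∈ A ∧ ω b ∈ B ∧ ω c ∈ C}
      = stdUniform A * stdUniform B * stdUniform C := by
  classical
  set s : Fin n → Set ℝ := fun k => if k = a then A else if k = b then B else
    if k = c then C else Set.univ with hs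
  have hset : {ω : Fin n → ℝ | ω a ∈ A ∧ ω b ∈ B ∧ ω c ∈ C} = Set.univ.pi s := by
    ext ω
    simp only [mem_setOf_eq, Set.mem_pi, Set.mem_univ, forall_true_left, hs]
    constructor
    · rintro ⟨h1, h2, h3⟩ k; split_ifs <;> simp_all
    · intro h
      refine ⟨?_, ?_, ?_⟩
      · have := h a; simpa using this
      · have := h b; simp only [if_neg (Ne.symm hab)] at this; simpa using this
      · have := h c
        simp only [if_neg (Ne.symm hac), if_neg (Ne.symm hbc)] at this
        simpa using this
  rw [hset, Measure.pi_pi]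
  have h1 : ∀ k ∈ (Finset.univ : Finset (Fin n)), k ∉ ({a, b, c} : Finset (Fin n)) →
      stdUniform (s k) = 1 := by
    intro k _ hk
    simp only [Finset.mem_insert, Finset.mem_singleton, not_or] at hk
    simp [hs, hk.1, hk.2.1, hk.2.2]
  rw [← Finset.prod_subset (Finset.subset_univ ({a, b, c} : Finset (Fin n))) h1]
  rw [Finset.prod_insert (by simp [hab, hac]), Finset.prod_insert (by simp [hbc]),
    Finset.prod_singleton]
  simp only [hs, if_pos rfl, if_neg (Ne.symm hab), if_neg (Ne.symm hac), if_neg (Ne.symm hbc)]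
  simp [mul_assoc]

/-- The V coordinate. -/
def Vc (d : ℕ) : Fin (d+1) := ⟨d-1, by omega⟩

/-- The interval attached to index `i`. -/
def Ii (α : ℝ) {d : ℕ} (i : Fin d) : Set ℝ :=
  Set.Ico ((i.val : ℝ) * α) ((i.val : ℝ) * α + α)

open Classical in
/-- The random vector realizing `Γ_d(α)`. -/
def gammaY (d : ℕ) (α : ℝ) (ω : Fin (d+1) → ℝ) (i : Fin d) : ℝ :=
  if i.val = d - 1 ∨ ω (Fin.last d) ∈ Ii α i then ω (Vc d) else ω (Fin.castSucc i)

variable {d : ℕ} {α : ℝ}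

lemma Vc_ne_last (hd : 2 ≤ d) : Vc d ≠ Fin.last d := by
  simp only [Vc, Fin.ne_iff_vne, Fin.val_last]; omega

lemma castSucc_ne_last (i : Fin d) : Fin.castSucc i ≠ Fin.last d := by
  simp only [Fin.ne_iff_vne, Fin.castSucc, Fin.val_last, Fin.coe_castAdd]
  exact Nat.ne_of_lt i.isLt

lemma castSucc_ne_Vc {i : Fin d} (hi : i.val ≠ d - 1) : Fin.castSucc i ≠ Vc d := by
  simp only [Vc, Fin.ne_iff_vne, Fin.castSucc, Fin.coe_castAdd]
  exact hi

lemma gammaY_measurable (d : ℕ) (α : ℝ) : Measurable (gammaY d α) := by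
  apply measurable_pi_lambda
  intro i
  unfold gammaY
  exact Measurable.ite
    (by rw [Set.setOf_or]
        exact (MeasurableSet.const _).union
          ((measurable_pi_apply (Fin.last d)) measurableSet_Ico))
    (measurable_pi_apply (Vc d)) (measurable_pi_apply (Fin.castSucc i))

lemma gammaY_last {i : Fin d} (hi : i.val = d - 1) (ω : Fin (d+1) → ℝ) :
    gammaY d α ω i = ω (Vc d) := by simp [gammaY, hi]

open Classical in
lemma gammaY_mid {i : Fin d} (hi : ¬ i.val = d - 1) (ω : Fin (d+1) → ℝ) :
    gammaY d α ω i = if ω (Fin.last d) ∈ Ii α i then ω (Vc d) else ω (Fin.castSucc i) := by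
  simp [gammaY, hi]

lemma val_le_of_ne_last (hd : 2 ≤ d) {i : Fin d} (hi : ¬ i.val = d - 1) :
    (i.val : ℝ) + 1 ≤ (d : ℝ) - 1 := by
  have h := i.isLt
  have : i.val + 1 ≤ d - 1 := by omega
  have := (Nat.cast_le (α := ℝ)).mpr this
  push_cast at this
  have hd1 : (1:ℝ) ≤ (d:ℕ) := by exact_mod_cast Nat.one_le_of_lt hd
  rw [Nat.cast_sub (by omega)] at this
  push_cast at this
  linarith

lemma stdUniform_Ii (hd : 2 ≤ d) (h0 : 0 ≤ α) (h1 : ((d:ℝ)-1) * α ≤ 1)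
    {i : Fin d} (hi : ¬ i.val = d - 1) :
    stdUniform (Ii α i) = ENNReal.ofReal α := by
  have hup : (i.val : ℝ) * α + α ≤ 1 := by
    have := val_le_of_ne_last hd hi
    nlinarith
  rw [Ii, stdUniform_Ico (by positivity) hup, add_sub_cancel_left]

lemma Ii_disjoint (h0 : 0 ≤ α) {i j : Fin d} (hij : i ≠ j) :
    Disjoint (Ii α i) (Ii α j) := by
  have key : ∀ i j : Fin d, i.val < j.val → Disjoint (Ii α i) (Ii α j) := by
    intro i j hlt
    rw [Set.disjoint_left]
    intro x hxi hxj
    have h1 : ((i.val : ℝ) + 1) * α ≤ (j.val : ℝ) * α := by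
      apply mul_le_mul_of_nonneg_right _ h0
      have : (i.val : ℕ) + 1 ≤ j.val := hlt
      exact_mod_cast this
    have h2 := hxi.2
    have h3 := hxj.1
    nlinarith [hxi.2, hxj.1]
  rcases lt_or_gt_of_ne (Fin.val_ne_of_ne hij) with h | h
  · exact key i j h
  · exact (key j i h).symm

lemma gammaY_comp_measurable (d : ℕ) (α : ℝ) (i : Fin d) :
    Measurable (fun ω => gammaY d α ω i) :=
  (measurable_pi_apply i).comp (gammaY_measurable d α)

lemma gammaY_margin (hd : 2 ≤ d) (h0 : 0 ≤ α) (h1 : ((d:ℝ)-1) * α ≤ 1) (i : Fin d) :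
    (piUnif (d+1)).map (fun ω => gammaY d α ω i) = stdUniform := by
  refine Measure.ext (fun A hA => ?_)
  rw [Measure.map_apply (gammaY_comp_measurable d α i) hA]
  by_cases hi : i.val = d - 1
  · have hset : (fun ω => gammaY d α ω i) ⁻¹' A = {ω : Fin (d+1) → ℝ | ω (Vc d) ∈ A} := by
      ext ω; simp [gammaY_last hi]
    rw [hset, box1]
  · have hset : (fun ω => gammaY d α ω i) ⁻¹' A =
        {ω : Fin (d+1) → ℝ | ω (Fin.last d) ∈ Ii α i ∧ ω (Vc d) ∈ A}
        ∪ {ω : Fin (d+1) → ℝ | ω (Fin.last d) ∈ (Ii α i)ᶜ ∧ ω (Fin.castSucc i) ∈ A} := by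
      ext ω
      by_cases h : ω (Fin.last d) ∈ Ii α i <;>
        simp [gammaY_mid hi, h]
    have hmeas2 : MeasurableSet {ω : Fin (d+1) → ℝ | ω (Fin.last d) ∈ (Ii α i)ᶜ
        ∧ ω (Fin.castSucc i) ∈ A} := by
      exact MeasurableSet.inter ((measurable_pi_apply _) measurableSet_Ico.compl)
        ((measurable_pi_apply _) hA)
    have hdisj : Disjoint {ω : Fin (d+1) → ℝ | ω (Fin.last d) ∈ Ii α i ∧ ω (Vc d) ∈ A}
        {ω : Fin (d+1) → ℝ | ω (Fin.last d) ∈ (Ii α i)ᶜ ∧ ω (Fin.castSucc i) ∈ A} := by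
      rw [Set.disjoint_left]
      rintro ω ⟨h1, _⟩ ⟨h2, _⟩
      exact h2 h1
    rw [hset, measure_union hdisj hmeas2,
      box2 (Vc_ne_last hd).symm, box2 (castSucc_ne_last i).symm]
    rw [← add_mul]
    have hcompl : stdUniform (Ii α i) + stdUniform ((Ii α i)ᶜ) = 1 := by
      rw [measure_compl (show MeasurableSet (Ii α i) from measurableSet_Ico) (measure_ne_top _ _), measure_univ, add_comm]
      exact tsub_add_cancel_of_le prob_le_one
    rw [hcompl, one_mul]

lemma meas_pair_last (hd : 2 ≤ d) (h0 : 0 ≤ α) (h1 : ((d:ℝ)-1) * α ≤ 1)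
    {i : Fin d} (hi : ¬ i.val = d - 1) {u : ℝ} (hu0 : 0 ≤ u) (hu1 : u ≤ 1) :
    piUnif (d+1) {ω | gammaY d α ω i ≤ u ∧ ω (Vc d) ≤ u}
      = ENNReal.ofReal α * ENNReal.ofReal u
        + (1 - ENNReal.ofReal α) * (ENNReal.ofReal u * ENNReal.ofReal u) := by
  have hset : {ω : Fin (d+1) → ℝ | gammaY d α ω i ≤ u ∧ ω (Vc d) ≤ u}
      = {ω : Fin (d+1) → ℝ | ω (Fin.last d) ∈ Ii α i ∧ ω (Vc d) ∈ Set.Iic u}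
        ∪ {ω : Fin (d+1) → ℝ | ω (Fin.last d) ∈ (Ii α i)ᶜ
            ∧ ω (Fin.castSucc i) ∈ Set.Iic u ∧ ω (Vc d) ∈ Set.Iic u} := by
    ext ω
    by_cases h : ω (Fin.last d) ∈ Ii α i <;>
      simp [gammaY_mid hi, h, and_comm]
  have hmeas2 : MeasurableSet {ω : Fin (d+1) → ℝ | ω (Fin.last d) ∈ (Ii α i)ᶜ
      ∧ ω (Fin.castSucc i) ∈ Set.Iic u ∧ ω (Vc d) ∈ Set.Iic u} :=
    ((measurable_pi_apply _) measurableSet_Ico.compl).inter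
      (((measurable_pi_apply _) measurableSet_Iic).inter
        ((measurable_pi_apply _) measurableSet_Iic))
  have hdisj : Disjoint {ω : Fin (d+1) → ℝ | ω (Fin.last d) ∈ Ii α i ∧ ω (Vc d) ∈ Set.Iic u}
      {ω : Fin (d+1) → ℝ | ω (Fin.last d) ∈ (Ii α i)ᶜ
        ∧ ω (Fin.castSucc i) ∈ Set.Iic u ∧ ω (Vc d) ∈ Set.Iic u} := by
    rw [Set.disjoint_left]; rintro ω ⟨ha, _⟩ ⟨hb, _⟩; exact hb ha
  rw [hset, measure_union hdisj hmeas2, box2 (Vc_ne_last hd).symm,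
    box3 (castSucc_ne_last i).symm ((Vc_ne_last hd)).symm (castSucc_ne_Vc hi),
    stdUniform_Ii hd h0 h1 hi, stdUniform_Iic hu0 hu1,
    measure_compl (show MeasurableSet (Ii α i) from measurableSet_Ico) (measure_ne_top _ _),
    measure_univ, stdUniform_Ii hd h0 h1 hi]
  ring

lemma meas_pair_mid (hd : 2 ≤ d) (h0 : 0 ≤ α) (h1 : ((d:ℝ)-1) * α ≤ 1)
    {i j : Fin d} (hi : ¬ i.val = d - 1) (hj : ¬ j.val = d - 1) (hij : i ≠ j)
    {u : ℝ} (hu0 : 0 ≤ u) (hu1 : u ≤ 1) :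
    piUnif (d+1) {ω | gammaY d α ω i ≤ u ∧ gammaY d α ω j ≤ u}
      = ENNReal.ofReal u * ENNReal.ofReal u := by
  have hIdisj := Ii_disjoint h0 hij
  have hset : {ω : Fin (d+1) → ℝ | gammaY d α ω i ≤ u ∧ gammaY d α ω j ≤ u}
      = {ω : Fin (d+1) → ℝ | ω (Fin.last d) ∈ Ii α i
            ∧ ω (Vc d) ∈ Set.Iic u ∧ ω (Fin.castSucc j) ∈ Set.Iic u}
        ∪ ({ω : Fin (d+1) → ℝ | ω (Fin.last d) ∈ Ii α j
            ∧ ω (Vc d) ∈ Set.Iic u ∧ ω (Fin.castSucc i) ∈ Set.Iic u}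
        ∪ {ω : Fin (d+1) → ℝ | ω (Fin.last d) ∈ (Ii α i ∪ Ii α j)ᶜ
            ∧ ω (Fin.castSucc i) ∈ Set.Iic u ∧ ω (Fin.castSucc j) ∈ Set.Iic u}) := by
    ext ω
    by_cases h : ω (Fin.last d) ∈ Ii α i
    · have h2 : ω (Fin.last d) ∉ Ii α j := fun hc => (Set.disjoint_left.mp hIdisj h) hc
      simp [gammaY_mid hi, gammaY_mid hj, h, h2, and_comm]
    · by_cases h2 : ω (Fin.last d) ∈ Ii α j
      · simp [gammaY_mid hi, gammaY_mid hj, h, h2, and_comm]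
      · simp [gammaY_mid hi, gammaY_mid hj, h, h2]
  have hm2 : MeasurableSet {ω : Fin (d+1) → ℝ | ω (Fin.last d) ∈ Ii α j
      ∧ ω (Vc d) ∈ Set.Iic u ∧ ω (Fin.castSucc i) ∈ Set.Iic u} :=
    ((measurable_pi_apply _) measurableSet_Ico).inter
      (((measurable_pi_apply _) measurableSet_Iic).inter
        ((measurable_pi_apply _) measurableSet_Iic))
  have hm3 : MeasurableSet {ω : Fin (d+1) → ℝ | ω (Fin.last d) ∈ (Ii α i ∪ Ii α j)ᶜ
      ∧ ω (Fin.castSucc i) ∈ Set.Iic u ∧ ω (Fin.castSucc j) ∈ Set.Iic u} :=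
    ((measurable_pi_apply _) (measurableSet_Ico.union measurableSet_Ico).compl).inter
      (((measurable_pi_apply _) measurableSet_Iic).inter
        ((measurable_pi_apply _) measurableSet_Iic))
  have hd1 : Disjoint {ω : Fin (d+1) → ℝ | ω (Fin.last d) ∈ Ii α i
        ∧ ω (Vc d) ∈ Set.Iic u ∧ ω (Fin.castSucc j) ∈ Set.Iic u}
      ({ω : Fin (d+1) → ℝ | ω (Fin.last d) ∈ Ii α j
            ∧ ω (Vc d) ∈ Set.Iic u ∧ ω (Fin.castSucc i) ∈ Set.Iic u}
        ∪ {ω : Fin (d+1) → ℝ | ω (Fin.last d) ∈ (Ii α i ∪ Ii α j)ᶜ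
            ∧ ω (Fin.castSucc i) ∈ Set.Iic u ∧ ω (Fin.castSucc j) ∈ Set.Iic u}) := by
    rw [Set.disjoint_left]
    rintro ω ⟨ha, _⟩ (⟨hb, _⟩ | ⟨hb, _⟩)
    · exact (Set.disjoint_left.mp hIdisj ha) hb
    · exact hb (Set.mem_union_left _ ha)
  have hd2 : Disjoint {ω : Fin (d+1) → ℝ | ω (Fin.last d) ∈ Ii α j
        ∧ ω (Vc d) ∈ Set.Iic u ∧ ω (Fin.castSucc i) ∈ Set.Iic u}
      {ω : Fin (d+1) → ℝ | ω (Fin.last d) ∈ (Ii α i ∪ Ii α j)ᶜ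
        ∧ ω (Fin.castSucc i) ∈ Set.Iic u ∧ ω (Fin.castSucc j) ∈ Set.Iic u} := by
    rw [Set.disjoint_left]
    rintro ω ⟨ha, _⟩ ⟨hb, _⟩
    exact hb (Set.mem_union_right _ ha)
  rw [hset, measure_union hd1 (hm2.union hm3), measure_union hd2 hm3,
    box3 (Vc_ne_last hd).symm (castSucc_ne_last j).symm (castSucc_ne_Vc hj).symm,
    box3 (Vc_ne_last hd).symm (castSucc_ne_last i).symm (castSucc_ne_Vc hi).symm,
    box3 (castSucc_ne_last i).symm (castSucc_ne_last j).symm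
      (fun hc => hij (Fin.castSucc_injective d hc)),
    stdUniform_Iic hu0 hu1]
  have hcompl : stdUniform (Ii α i) + (stdUniform (Ii α j)
      + stdUniform ((Ii α i ∪ Ii α j)ᶜ)) = 1 := by
    rw [measure_compl (show MeasurableSet (Ii α i ∪ Ii α j) from
        measurableSet_Ico.union measurableSet_Ico) (measure_ne_top _ _), measure_univ,
      ← add_assoc,
      ← measure_union hIdisj (show MeasurableSet (Ii α j) from measurableSet_Ico)]
    exact add_tsub_cancel_of_le prob_le_one
  rw [show ∀ x y z w : ENNReal, x*w*w + (y*w*w + z*w*w) = (x+(y+z))*(w*w) from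
    fun x y z w => by ring, hcompl, one_mul]

-- NEW PART
lemma mem_Ioo01 : Set.Ioo (0:ℝ) 1 ∈ nhdsWithin (0:ℝ) (Set.Ioi 0) :=
  Ioo_mem_nhdsGT_of_mem ⟨le_refl 0, one_pos⟩

lemma tdc_diag (hd : 2 ≤ d) (h0 : 0 ≤ α) (h1 : ((d:ℝ)-1) * α ≤ 1) (i : Fin d) :
    HasTailDepCoeff (piUnif (d+1)) (fun ω => gammaY d α ω i) (fun ω => gammaY d α ω i) 1 := by
  unfold HasTailDepCoeff
  have hEq : (fun u : ℝ => ((piUnif (d+1))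
        {ω | gammaY d α ω i ≤ u ∧ gammaY d α ω i ≤ u}).toReal / u)
      =ᶠ[nhdsWithin (0:ℝ) (Set.Ioi 0)] fun _ => (1:ℝ) := by
    filter_upwards [mem_Ioo01] with u hu
    have hset : {ω : Fin (d+1) → ℝ | gammaY d α ω i ≤ u ∧ gammaY d α ω i ≤ u}
        = (fun ω => gammaY d α ω i) ⁻¹' (Set.Iic u) := by
      ext ω; simp [and_self]
    rw [hset, ← Measure.map_apply (gammaY_comp_measurable d α i) measurableSet_Iic,
      gammaY_margin hd h0 h1, stdUniform_Iic hu.1.le hu.2.le,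
      ENNReal.toReal_ofReal hu.1.le, div_self (ne_of_gt hu.1)]
  exact Tendsto.congr' hEq.symm tendsto_const_nhds

lemma tdc_last (hd : 2 ≤ d) (h0 : 0 ≤ α) (hα1 : α ≤ 1) (h1 : ((d:ℝ)-1) * α ≤ 1)
    {i j : Fin d} (hi : ¬ i.val = d - 1) (hj : j.val = d - 1) :
    HasTailDepCoeff (piUnif (d+1)) (fun ω => gammaY d α ω i) (fun ω => gammaY d α ω j) α := by
  unfold HasTailDepCoeff
  have hEq : (fun u : ℝ => ((piUnif (d+1))
        {ω | gammaY d α ω i ≤ u ∧ gammaY d α ω j ≤ u}).toReal / u)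
      =ᶠ[nhdsWithin (0:ℝ) (Set.Ioi 0)] fun u => α + (1 - α) * u := by
    filter_upwards [mem_Ioo01] with u hu
    have hset : {ω : Fin (d+1) → ℝ | gammaY d α ω i ≤ u ∧ gammaY d α ω j ≤ u}
        = {ω : Fin (d+1) → ℝ | gammaY d α ω i ≤ u ∧ ω (Vc d) ≤ u} := by
      ext ω; simp only [Set.mem_setOf_eq, gammaY_last hj]
    rw [hset, meas_pair_last hd h0 h1 hi hu.1.le hu.2.le]
    rw [← ENNReal.ofReal_one, ← ENNReal.ofReal_sub _ h0, ← ENNReal.ofReal_mul h0,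
      ← ENNReal.ofReal_mul hu.1.le, ← ENNReal.ofReal_mul (by linarith),
      ← ENNReal.ofReal_add (mul_nonneg h0 hu.1.le) (by nlinarith [hu.1.le]),
      ENNReal.toReal_ofReal (by nlinarith [hu.1.le])]
    rw [div_eq_iff (ne_of_gt hu.1)]
    ring
  refine Tendsto.congr' hEq.symm ?_
  have h2 : Tendsto (fun u : ℝ => α + (1 - α) * u) (nhds 0) (nhds α) := by
    have hc : Continuous (fun u : ℝ => α + (1 - α) * u) := by continuity
    have := hc.tendsto (0:ℝ)
    simpa using this
  exact h2.mono_left nhdsWithin_le_nhds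

lemma tdc_last' (hd : 2 ≤ d) (h0 : 0 ≤ α) (hα1 : α ≤ 1) (h1 : ((d:ℝ)-1) * α ≤ 1)
    {i j : Fin d} (hi : i.val = d - 1) (hj : ¬ j.val = d - 1) :
    HasTailDepCoeff (piUnif (d+1)) (fun ω => gammaY d α ω i) (fun ω => gammaY d α ω j) α := by
  have h := tdc_last hd h0 hα1 h1 hj hi
  have hsets : ∀ u : ℝ, {ω : Fin (d+1) → ℝ | gammaY d α ω i ≤ u ∧ gammaY d α ω j ≤ u}
      = {ω : Fin (d+1) → ℝ | gammaY d α ω j ≤ u ∧ gammaY d α ω i ≤ u} := by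
    intro u; ext ω; simp only [Set.mem_setOf_eq]; exact and_comm
  unfold HasTailDepCoeff at h ⊢
  simpa only [hsets] using h

lemma tdc_mid (hd : 2 ≤ d) (h0 : 0 ≤ α) (h1 : ((d:ℝ)-1) * α ≤ 1)
    {i j : Fin d} (hi : ¬ i.val = d - 1) (hj : ¬ j.val = d - 1) (hij : i ≠ j) :
    HasTailDepCoeff (piUnif (d+1)) (fun ω => gammaY d α ω i) (fun ω => gammaY d α ω j) 0 := by
  unfold HasTailDepCoeff
  have hEq : (fun u : ℝ => ((piUnif (d+1))
        {ω | gammaY d α ω i ≤ u ∧ gammaY d α ω j ≤ u}).toReal / u)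
      =ᶠ[nhdsWithin (0:ℝ) (Set.Ioi 0)] fun u => u := by
    filter_upwards [mem_Ioo01] with u hu
    rw [meas_pair_mid hd h0 h1 hi hj hij hu.1.le hu.2.le,
      ← ENNReal.ofReal_mul hu.1.le, ENNReal.toReal_ofReal (by nlinarith [hu.1.le])]
    rw [mul_div_assoc, div_self (ne_of_gt hu.1), mul_one]
  refine Tendsto.congr' hEq.symm ?_
  exact (continuous_id.tendsto' (0:ℝ) 0 rfl).mono_left nhdsWithin_le_nhds

/-- Proposition 4.7: for `d ≥ 2` and `α ∈ [0,1]`, the matrix `Γ_d(α)` (unit diagonal, entries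
`α` in the last row and column off the diagonal, zeros elsewhere) is a tail-dependence matrix
if and only if `0 ≤ α ≤ 1/(d-1)`. -/
theorem Gamma_tail_dependence_iff {d : ℕ} (hd : 2 ≤ d) (α : ℝ) (hα : α ∈ Set.Icc (0:ℝ) 1) :
    IsTailDependenceMatrix (Matrix.of fun i j : Fin d =>
        if i = j then (1:ℝ) else if i.val = d - 1 ∨ j.val = d - 1 then α else 0) ↔
      0 ≤ α ∧ α ≤ 1 / ((d : ℝ) - 1) := by
  classical
  have hd1 : (0:ℝ) < (d:ℝ) - 1 := by
    have : (2:ℝ) ≤ (d:ℝ) := by exact_mod_cast hd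
    linarith
  constructor
  · rintro ⟨Ω, mΩ, μ, hμ, Y, hY, hmarg, htdc⟩
    refine ⟨hα.1, ?_⟩
    haveI := hμ
    set L : Fin d := ⟨d - 1, by omega⟩ with hLdef
    have hLval : L.val = d - 1 := rfl
    have hne_val : ∀ i : Fin d, i ≠ L → ¬ i.val = d - 1 := by
      intro i hiL h
      exact hiL (Fin.ext (by rw [h, hLval]))
    have hYm : ∀ i : Fin d, Measurable fun ω => Y ω i :=
      fun i => (measurable_pi_apply i).comp hY
    -- the pairwise sets
    set S : Fin d → Fin d → ℝ → Set Ω := fun i j u => {ω | Y ω i ≤ u ∧ Y ω j ≤ u} with hSdef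
    have hSm : ∀ i j u, MeasurableSet (S i j u) := by
      intro i j u
      exact ((hYm i) measurableSet_Iic).inter ((hYm j) measurableSet_Iic)
    -- pointwise Bonferroni bound
    have key : ∀ u : ℝ, ∑ i ∈ Finset.univ.erase L, μ (S i L u)
        ≤ μ (S L L u) + ∑ p ∈ (Finset.univ.erase L).offDiag, μ (S p.1 p.2 u) := by
      intro u
      have h1 := bonferroni μ (fun i => S i L u) (fun i => hSm i L u) (Finset.univ.erase L)
      refine le_trans h1 (add_le_add ?_ ?_)
      · apply measure_mono
        apply Set.iUnion₂_subset
        intro i _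
        intro ω hω
        exact ⟨hω.2, hω.2⟩
      · apply Finset.sum_le_sum
        intro p _
        apply measure_mono
        intro ω hω
        exact ⟨hω.1.1, hω.2.1⟩
    -- real version, divided by u
    have keyR : ∀ᶠ u in nhdsWithin (0:ℝ) (Set.Ioi 0),
        (∑ i ∈ Finset.univ.erase L, (μ (S i L u)).toReal / u)
        ≤ (μ (S L L u)).toReal / u
          + ∑ p ∈ (Finset.univ.erase L).offDiag, (μ (S p.1 p.2 u)).toReal / u := by
      filter_upwards [self_mem_nhdsWithin] with u hu
      have hu0 : (0:ℝ) < u := hu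
      have hreal : (∑ i ∈ Finset.univ.erase L, (μ (S i L u)).toReal)
          ≤ (μ (S L L u)).toReal
            + ∑ p ∈ (Finset.univ.erase L).offDiag, (μ (S p.1 p.2 u)).toReal := by
        have hfin : (μ (S L L u) + ∑ p ∈ (Finset.univ.erase L).offDiag, μ (S p.1 p.2 u)) ≠ ⊤ := by
          apply ENNReal.add_ne_top.mpr
          constructor
          · exact measure_ne_top μ _
          · exact (ENNReal.sum_lt_top.mpr (fun p _ => measure_lt_top μ _)).ne
        have := ENNReal.toReal_mono hfin (key u)
        rwa [ENNReal.toReal_sum (fun i _ => measure_ne_top μ _),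
          ENNReal.toReal_add (measure_ne_top μ _)
            (ENNReal.sum_lt_top.mpr (fun p _ => measure_lt_top μ _)).ne,
          ENNReal.toReal_sum (fun p _ => measure_ne_top μ _)] at this
      rw [← Finset.sum_div, ← Finset.sum_div, ← add_div]
      exact div_le_div_of_nonneg_right hreal hu0.le |>.trans (le_refl _)
    -- limits
    have hF : Tendsto (fun u => ∑ i ∈ Finset.univ.erase L, (μ (S i L u)).toReal / u)
        (nhdsWithin (0:ℝ) (Set.Ioi 0)) (nhds (((d:ℝ) - 1) * α)) := by
      have h1 : Tendsto (fun u => ∑ i ∈ Finset.univ.erase L, (μ (S i L u)).toReal / u)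
          (nhdsWithin (0:ℝ) (Set.Ioi 0))
          (nhds (∑ i ∈ Finset.univ.erase L, α)) := by
        apply tendsto_finset_sum
        intro i hi
        have h := htdc i L
        have hiL : i ≠ L := (Finset.mem_erase.mp hi).1
        have : (Matrix.of fun i j : Fin d =>
            if i = j then (1:ℝ) else if i.val = d - 1 ∨ j.val = d - 1 then α else 0) i L = α := by
          simp only [Matrix.of_apply, if_neg hiL, hLval]
          simp
        rwa [this] at h
      have h2 : (∑ _i ∈ Finset.univ.erase L, α) = ((d:ℝ) - 1) * α := by
        rw [Finset.sum_const, Finset.card_erase_of_mem (Finset.mem_univ L),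
          Finset.card_univ, Fintype.card_fin, nsmul_eq_mul, Nat.cast_sub (by omega)]
        push_cast
        ring
      rwa [h2] at h1
    have hG : Tendsto (fun u => (μ (S L L u)).toReal / u
          + ∑ p ∈ (Finset.univ.erase L).offDiag, (μ (S p.1 p.2 u)).toReal / u)
        (nhdsWithin (0:ℝ) (Set.Ioi 0)) (nhds (1 + 0)) := by
      apply Tendsto.add
      · have h := htdc L L
        have : (Matrix.of fun i j : Fin d =>
            if i = j then (1:ℝ) else if i.val = d - 1 ∨ j.val = d - 1 then α else 0) L L = 1 := by
          simp [Matrix.of_apply]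
        rwa [this] at h
      · have h1 : Tendsto (fun u => ∑ p ∈ (Finset.univ.erase L).offDiag,
            (μ (S p.1 p.2 u)).toReal / u)
            (nhdsWithin (0:ℝ) (Set.Ioi 0))
            (nhds (∑ p ∈ (Finset.univ.erase L).offDiag, (0:ℝ))) := by
          apply tendsto_finset_sum
          intro p hp
          rw [Finset.mem_offDiag] at hp
          obtain ⟨hp1, hp2, hp12⟩ := hp
          have h := htdc p.1 p.2
          have : (Matrix.of fun i j : Fin d =>
              if i = j then (1:ℝ) else if i.val = d - 1 ∨ j.val = d - 1 then α else 0)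
                p.1 p.2 = 0 := by
            simp only [Matrix.of_apply, if_neg hp12]
            rw [if_neg]
            push_neg
            exact ⟨hne_val p.1 (Finset.mem_erase.mp hp1).1,
              hne_val p.2 (Finset.mem_erase.mp hp2).1⟩
          rwa [this] at h
        simpa using h1
    have hle := le_of_tendsto_of_tendsto hF hG keyR
    rw [le_div_iff₀ hd1]
    linarith
  · rintro ⟨h0, hle⟩
    have h1 : ((d:ℝ) - 1) * α ≤ 1 := by
      rw [le_div_iff₀ hd1] at hle
      linarith
    refine ⟨Fin (d+1) → ℝ, inferInstance, piUnif (d+1), inferInstance, gammaY d α,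
      gammaY_measurable d α, gammaY_margin hd h0 h1, ?_⟩
    intro i j
    simp only [Matrix.of_apply]
    by_cases hij : i = j
    · subst hij
      rw [if_pos rfl]
      exact tdc_diag hd h0 h1 i
    · rw [if_neg hij]
      by_cases hj : j.val = d - 1
      · rw [if_pos (Or.inr hj)]
        have hi : ¬ i.val = d - 1 := by
          intro h
          exact hij (Fin.ext (by rw [h, hj]))
        exact tdc_last hd h0 hα.2 h1 hi hj
      · by_cases hi : i.val = d - 1
        · rw [if_pos (Or.inl hi)]
          exact tdc_last' hd h0 hα.2 h1 hi hj
        · rw [if_neg (by push_neg; exact ⟨hi, hj⟩)]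
          exact tdc_mid hd h0 h1 hi hj hij
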